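/- Let α, β ∈ ℂ satisfy α² ∉ {0,1}, β² ∉ {0,1}, α² ≠ β², α²β² ≠ 1, and let ρ ∈ ℂ with ρ² = αβ. Set e₁ = (α+β)/(α−β) and e₂ = (αβ+1)/(αβ−1). If (s, t) satisfies t² = (s−1)(s−e₁²)(s−e₂²), then the point (X, Y) with X = (α−β)²(s−1)/(4αβ) and Y = (α−β)³t/(8αβρ) satisfies Y² = X(X−1)(X − (α−β)²/(αβ−1)²). -/

import Mathlib

set_option maxRecDepth 8000
set_option maxHeartbeats 2000000

theorem stmt_4 (α β ρ s t : ℂ)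
    (hα0 : α^2 ≠ 0) (hα1 : α^2 ≠ 1) (hβ0 : β^2 ≠ 0) (hβ1 : β^2 ≠ 1)
    (hαβ : α^2 ≠ β^2) (hαβ1 : α^2 * β^2 ≠ 1)
    (hρ : ρ^2 = α * β)
    (hW : t^2 = (s - 1) * (s - ((α + β) / (α - β))^2) * (s - ((α * β + 1) / (α * β - 1))^2)) :
    ((α - β)^3 * t / (8 * (α * β) * ρ))^2 =
      ((α - β)^2 * (s - 1) / (4 * (α * β))) *
      ((α - β)^2 * (s - 1) / (4 * (α * β)) - 1) *
      ((α - β)^2 * (s - 1) / (4 * (α * β)) - (α - β)^2 / (α * β - 1)^2) := by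
  have hab : α - β ≠ 0 := fun h => hαβ (by rw [sub_eq_zero] at h; rw [h])
  have hm : α * β ≠ 0 := by
    intro h
    rcases mul_eq_zero.mp h with h | h
    · exact hα0 (by rw [h]; ring)
    · exact hβ0 (by rw [h]; ring)
  have h1 : α * β - 1 ≠ 0 := fun h => hαβ1 (by
    have : α * β = 1 := by linear_combination h
    linear_combination (α*β+1) * this)
  have h2 : ((α - β)^3 * t / (8 * (α * β) * ρ))^2 = (α - β)^6 * t^2 / (64 * (α * β)^3) := by
    rw [div_pow, mul_pow, mul_pow, hρ]; ring_nf
  rw [h2, hW]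
  have ha : α ≠ 0 := left_ne_zero_of_mul hm
  have hb : β ≠ 0 := right_ne_zero_of_mul hm
  field_simp
  ring
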